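/- Let G be a strongly min-unique connected graph (with respect to positive edge weights). For vertices v₁, …, v_k, define R₁ to be the one-vertex subgraph {v₁}, and for 2 ≤ i ≤ k let R_i = R_{i−1} ∪ P_i, where P_i is the unique shortest path from v_i to the vertex of R_{i−1} closest to v_i. Then each R_i is a subtree of G. -/

import Mathlib

open SimpleGraph

/-- The weight of a walk: the sum of the weights of its edges. -/
noncomputable def walkWeight {V : Type*} {G : SimpleGraph V} (w : Sym2 V → ℝ)
    {u v : V} (p : G.Walk u v) : ℝ :=
  (p.edges.map w).sum

/-- `p` is a shortest `u`-`v` path: a path of minimum weight among all `u`-`v` paths. -/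
def IsShortestPath {V : Type*} (G : SimpleGraph V) (w : Sym2 V → ℝ)
    {u v : V} (p : G.Walk u v) : Prop :=
  p.IsPath ∧ ∀ q : G.Walk u v, q.IsPath → walkWeight w p ≤ walkWeight w q

section Helpers

variable {V : Type*} {G : SimpleGraph V}

/-- Lift a walk in `G` whose edges all lie in a subgraph `H` to a walk in `H.coe`. -/
def liftWalk (H : G.Subgraph) :
    ∀ {a b : V} (p : G.Walk a b) (ha : a ∈ H.verts) (hb : b ∈ H.verts),
      (∀ e ∈ p.edges, e ∈ H.edgeSet) → H.coe.Walk ⟨a, ha⟩ ⟨b, hb⟩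
  | _, _, SimpleGraph.Walk.nil, _, _, _ => SimpleGraph.Walk.nil
  | _, _, @SimpleGraph.Walk.cons _ _ a c b h p, ha, hb, he =>
      have hac : s(a, c) ∈ H.edgeSet := he _ (by simp)
      have hc : c ∈ H.verts := H.edge_vert (Subgraph.mem_edgeSet.mp hac).symm
      SimpleGraph.Walk.cons
        (by exact Subgraph.mem_edgeSet.mp hac : H.coe.Adj ⟨a, ha⟩ ⟨c, hc⟩)
        (liftWalk H p hc hb fun e he' => he _ (by simp [he']))

lemma map_liftWalk (H : G.Subgraph) {a b : V} (p : G.Walk a b) (ha : a ∈ H.verts)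
    (hb : b ∈ H.verts) (he : ∀ e ∈ p.edges, e ∈ H.edgeSet) :
    (liftWalk H p ha hb he).map H.hom = p := by
  induction p with
  | nil => rfl
  | cons h p ih => exact congrArg (Walk.cons h) (ih _ hb _)

lemma coe_edge_mem (H : G.Subgraph) {e : Sym2 H.verts} (he : e ∈ H.coe.edgeSet) :
    e.map Subtype.val ∈ H.edgeSet := by
  induction e using Sym2.ind with
  | _ x y => exact Subgraph.mem_edgeSet.mpr (by exact he)

lemma acyclic_of_no_cycle (H : G.Subgraph)
    (hQ : ∀ (x : V) (c : G.Walk x x), c.IsCycle → ∃ e ∈ c.edges, e ∉ H.edgeSet) :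
    H.coe.IsAcyclic := by
  rintro ⟨x, hx⟩ c hc
  obtain ⟨e, hec, heH⟩ := hQ x (c.map H.hom) (hc.map Subgraph.hom_injective)
  replace hec : e ∈ (c.map H.hom).edges := hec
  rw [Walk.edges_map, List.mem_map] at hec
  obtain ⟨e', he', rfl⟩ := hec
  exact heH (coe_edge_mem H (c.edges_subset_edgeSet he'))

lemma no_cycle_of_acyclic (H : G.Subgraph) (hH : H.coe.IsAcyclic) (x : V)
    (c : G.Walk x x) (hc : c.IsCycle) : ∃ e ∈ c.edges, e ∉ H.edgeSet := by
  by_contra hcon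
  push_neg at hcon
  have hx : x ∈ H.verts := by
    cases c with
    | nil => exact absurd hc (Walk.IsCycle.not_of_nil)
    | cons h p =>
        exact H.edge_vert (Subgraph.mem_edgeSet.mp (hcon _ (List.mem_cons_self)))
  have hmap := map_liftWalk H c hx hx hcon
  have : (liftWalk H c hx hx hcon).IsCycle := by
    rw [← Walk.map_isCycle_iff_of_injective Subgraph.hom_injective, hmap]
    exact hc
  exact hH _ this

lemma pendant_tree {H : G.Subgraph} (hH : H.coe.IsTree) {u a : V} (h : G.Adj u a)
    (ha : a ∈ H.verts) (hu : u ∉ H.verts) : (H ⊔ G.subgraphOfAdj h).coe.IsTree := by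
  classical
  constructor
  · -- connected
    have hHc : H.Connected := Subgraph.connected_iff'.mpr hH.isConnected
    have : (H ⊔ G.subgraphOfAdj h).Connected := by
      refine Subgraph.connected_sup hHc.preconnected (Subgraph.subgraphOfAdj_connected h).preconnected ⟨a, ?_⟩
      rw [Subgraph.verts_inf]
      exact ⟨ha, by simp⟩
    exact this.coe
  · -- acyclic
    refine acyclic_of_no_cycle _ (fun x c hc => ?_)
    by_contra hcon
    push_neg at hcon
    -- every edge of c is in H.edgeSet or equals s(u,a)
    have hedge : ∀ e ∈ c.edges, e ∈ H.edgeSet ∨ e = s(u, a) := by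
      intro e hec
      have := hcon e hec
      rw [Subgraph.edgeSet_sup, Set.mem_union, edgeSet_subgraphOfAdj] at this
      simpa using this
    by_cases hmem : s(u, a) ∈ c.edges
    · -- rotate the cycle to start at u
      have husup : u ∈ c.support := Walk.fst_mem_support_of_mem_edges c hmem
      obtain ⟨c', hc'cyc, hc'edges⟩ :
          ∃ c' : G.Walk u u, c'.IsCycle ∧ ∀ e ∈ c'.edges, e ∈ H.edgeSet ∨ e = s(u, a) :=
        ⟨c.rotate u husup, hc.rotate husup,
          fun e hec => hedge e ((c.rotate_edges u husup).mem_iff.mp hec)⟩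
      -- u-incident edges are not in H
      have hnotH : ∀ (y : V), s(u, y) ∉ H.edgeSet := by
        intro y hy
        exact hu (H.edge_vert (Subgraph.mem_edgeSet.mp hy))
      cases c' with
      | nil => exact absurd hc'cyc (Walk.IsCycle.not_of_nil)
      | @cons _ b _ hub q =>
          -- first edge is s(u, b) and must be s(u, a)
          have hfirst : s(u, b) = s(u, a) := by
            rcases hc'edges _ (by rw [Walk.edges_cons]; exact List.mem_cons_self) with hin | heq
            · exact absurd hin (hnotH b)
            · exact heq
          -- q is nonempty, its last dart ends at u
          have hq3 : 3 ≤ (Walk.cons hub q).length := hc'cyc.three_le_length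
          have hqne : q.darts ≠ [] := by
            intro hnil
            have : q.length = 0 := by
              have := congrArg List.length hnil
              simpa [Walk.length_darts] using this
            simp [Walk.length_cons, this] at hq3
          set d := q.darts.getLast hqne with hd
          have hdsnd : d.snd = u := by rw [hd, Walk.getLast_darts_eq_lastDart]; rfl
          have hde : d.edge ∈ q.edges := by
            rw [Walk.edges]
            exact List.mem_map_of_mem (List.getLast_mem hqne)
          have hdeu : d.edge = s(d.fst, u) := by rw [← hdsnd]; rfl
          have hlast : d.edge = s(u, a) := by
            rcases hc'edges _ (by rw [Walk.edges_cons]; exact List.mem_cons_of_mem _ hde) with hin | heq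
            · exfalso
              apply hnotH d.fst
              rw [Sym2.eq_swap]
              rw [hdeu] at hin
              exact hin
            · exact heq
          have : s(u, b) ∈ q.edges := by rw [hfirst, ← hlast]; exact hde
          rw [Walk.cons_isCycle_iff] at hc'cyc
          exact hc'cyc.2 this
    · -- all edges in H: contradicts acyclicity of H
      have : ∀ e ∈ c.edges, e ∈ H.edgeSet := by
        intro e hec
        rcases hedge e hec with hin | rfl
        · exact hin
        · exact absurd hec hmem
      obtain ⟨e, hec, heH⟩ := no_cycle_of_acyclic H hH.IsAcyclic x c hc
      exact heH (this e hec)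

lemma sup_singleton_eq (R : G.Subgraph) {z : V} (hz : z ∈ R.verts) :
    R ⊔ G.singletonSubgraph z = R :=
  sup_eq_left.mpr ((SimpleGraph.singletonSubgraph_le_iff z R).mpr hz)

lemma key_tree (R : G.Subgraph) (hR : R.coe.IsTree) :
    ∀ (v z : V) (P : G.Walk v z), z ∈ R.verts → P.IsPath →
      (∀ y ∈ P.support, y ∈ R.verts → y = z) → (R ⊔ P.toSubgraph).coe.IsTree := by
  intro v z P
  induction P with
  | nil =>
      intro hz _ _
      simp only [Walk.toSubgraph]
      rw [sup_singleton_eq R hz]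
      exact hR
  | @cons a b cz hadj q ih =>
      intro hz hP hsupp
      have hq : q.IsPath := ((Walk.cons_isPath_iff _ _).mp hP).1
      have hT : (R ⊔ q.toSubgraph).coe.IsTree :=
        ih hz hq (fun y hy hyR => hsupp y (by rw [Walk.support_cons]; exact List.mem_cons_of_mem _ hy) hyR)
      have hb : b ∈ (R ⊔ q.toSubgraph).verts := Or.inr q.start_mem_verts_toSubgraph
      have hv : a ∉ (R ⊔ q.toSubgraph).verts := by
        rintro (hvR | hvq)
        · have haz : a = cz := hsupp a (Walk.start_mem_support _) hvR
          exact ((Walk.cons_isPath_iff _ _).mp hP).2 (haz ▸ q.end_mem_support)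
        · rw [Walk.mem_verts_toSubgraph] at hvq
          exact ((Walk.cons_isPath_iff _ _).mp hP).2 hvq
      have hpt := pendant_tree hT hadj hb hv
      have heq : R ⊔ (Walk.cons hadj q).toSubgraph = (R ⊔ q.toSubgraph) ⊔ G.subgraphOfAdj hadj := by
        show R ⊔ (G.subgraphOfAdj hadj ⊔ q.toSubgraph) = _
        rw [sup_comm (G.subgraphOfAdj hadj) q.toSubgraph, ← sup_assoc]
      rw [heq]
      exact hpt


end Helpers

/-- inductive step of the core construction: let `G` be a connected graph
with positive edge weights in which shortest paths are unique, let `R` be a subtree of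
`G`, and let `P` be the (unique) shortest path from a vertex `v` to a closest vertex `z`
of `R` (i.e. the weight of `P` is at most the weight of any path from `v` to any vertex
of `R`).  Then `R ∪ P` is again a subtree of `G`. -/
theorem stmt11 {V : Type*} [Fintype V] (G : SimpleGraph V) (hG : G.Connected)
    (w : Sym2 V → ℝ) (hw : ∀ e ∈ G.edgeSet, 0 < w e)
    (hmu : ∀ (u u' : V) (p q : G.Walk u u'),
      IsShortestPath G w p → IsShortestPath G w q → p = q)
    (R : G.Subgraph) (hR : R.coe.IsTree) (v z : V) (hz : z ∈ R.verts)
    (P : G.Walk v z) (hP : P.IsPath)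
    (hclosest : ∀ y ∈ R.verts, ∀ q : G.Walk v y, q.IsPath →
      walkWeight w P ≤ walkWeight w q) :
    (R ⊔ P.toSubgraph).coe.IsTree := by
  classical
  apply key_tree R hR v z P hz hP
  intro y hy hyR
  by_contra hne
  have hq := hP.takeUntil hy
  have hle := hclosest y hyR (P.takeUntil y hy) hq
  have hsplit : walkWeight w P = walkWeight w (P.takeUntil y hy) + walkWeight w (P.dropUntil y hy) := by
    have h2 : walkWeight w ((P.takeUntil y hy).append (P.dropUntil y hy)) =
        walkWeight w (P.takeUntil y hy) + walkWeight w (P.dropUntil y hy) := by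
      unfold walkWeight
      rw [Walk.edges_append, List.map_append, List.sum_append]
    rw [P.take_spec hy] at h2
    exact h2
  have hpos : 0 < walkWeight w (P.dropUntil y hy) := by
    apply List.sum_pos
    · intro x hx
      rw [List.mem_map] at hx
      obtain ⟨e, he, rfl⟩ := hx
      exact hw e (Walk.edges_subset_edgeSet _ (P.edges_dropUntil_subset hy he))
    · intro hnil
      have hmapnil : (P.dropUntil y hy).edges = [] := List.map_eq_nil_iff.mp hnil
      have hlen : (P.dropUntil y hy).length = 0 := by
        rw [← Walk.length_edges, hmapnil]; rfl
      exact hne (Walk.eq_of_length_eq_zero hlen)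
  linarith
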